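/- arXiv:2205.07791 — 2 statements merged into one kernel-verified Lean document; each statement's English description precedes it below -/
import Mathlib

section
/- The 2×2 matrix A = [[1,0],[0,0]] together with u = (1,1) gives a counterexample to the strict inequality in Moussong's Lemma 9.5: the nerve N(A) consists of the single point z = (1,0), the vector u has nonnegative coordinates with uᵀAu = 1, and for the unique point z of N(A) one has uᵀAz = 1, not strictly greater than 1. -/
open Matrix

/-- The nerve of an almost negative matrix `A`: the set of vectors with nonnegative
coordinates, supported on an index set `I` with `A_I` positive definite, and of norm 1
with respect to the bilinear form of `A`. -/
def nerve {n : ℕ} (A : Matrix (Fin n) (Fin n) ℝ) : Set (Fin n → ℝ) :=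
  {z | (∀ i, 0 ≤ z i) ∧
    (∃ I : Finset (Fin n), (∀ i, i ∉ I → z i = 0) ∧
      (A.submatrix (fun x : I => (x : Fin n)) (fun x : I => (x : Fin n))).PosDef) ∧
    z ⬝ᵥ A.mulVec z = 1}

/-- The matrix `A = [[1,0],[0,0]]` and `u = (1,1)` give a counterexample to the
strict inequality of Moussong's Lemma 9.5: `N(A) = {(1,0)}`, `u` has nonnegative coordinates
with `⟨u,u⟩ = 1`, and for the unique point `z = (1,0)` of `N(A)` one has `⟨u,z⟩ = 1`,
not `> 1`. -/
theorem stmt2 :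
    nerve (!![1, 0; 0, 0] : Matrix (Fin 2) (Fin 2) ℝ) = {![1, 0]} ∧
    (∀ i, 0 ≤ (![1, 1] : Fin 2 → ℝ) i) ∧
    (![1, 1] : Fin 2 → ℝ) ⬝ᵥ (!![1, 0; 0, 0] : Matrix (Fin 2) (Fin 2) ℝ).mulVec ![1, 1] = 1 ∧
    (![1, 1] : Fin 2 → ℝ) ⬝ᵥ (!![1, 0; 0, 0] : Matrix (Fin 2) (Fin 2) ℝ).mulVec ![1, 0] = 1 := by
  refine ⟨?_, ?_, ?_, ?_⟩
  · ext z
    simp only [Set.mem_singleton_iff]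
    constructor
    · rintro ⟨hpos, ⟨I, hI0, hIpd⟩, hnorm⟩
      have hnorm' : z 0 * z 0 = 1 := by
        simp [nerve, dotProduct, mulVec, Fin.sum_univ_two] at hnorm
        linarith
      have hz0 : z 0 = 1 := by nlinarith [hpos 0]
      have h1 : (1 : Fin 2) ∉ I := by
        intro h1I
        set v : I → ℝ := fun x => if (x : Fin 2) = 1 then 1 else 0 with hv
        have hvne : v ≠ 0 := by
          intro h
          have := congrFun h ⟨1, h1I⟩
          simp [hv] at this
        have hq := (posDef_iff_dotProduct_mulVec.mp hIpd).2 hvne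
        simp only [star_trivial] at hq
        have hzero : v ⬝ᵥ (!![1, 0; 0, 0].submatrix (fun x : I => (x : Fin 2))
            (fun x : I => (x : Fin 2))) *ᵥ v = 0 := by
          unfold dotProduct mulVec dotProduct
          apply Finset.sum_eq_zero
          intro x _
          by_cases hx : (x : Fin 2) = 1
          · apply mul_eq_zero_of_right
            apply Finset.sum_eq_zero
            intro y _
            have hrow : ∀ j : Fin 2, (!![1, 0; 0, 0] : Matrix (Fin 2) (Fin 2) ℝ) 1 j = 0 := by
              intro j; fin_cases j <;> simp
            simp [Matrix.submatrix_apply, hx, hrow]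
          · simp [hv, hx]
        rw [hzero] at hq
        exact lt_irrefl 0 hq
      have hz1 : z 1 = 0 := hI0 1 h1
      funext i
      fin_cases i <;> simp [hz0, hz1]
    · rintro rfl
      refine ⟨?_, ⟨{0}, ?_, ?_⟩, ?_⟩
      · intro i; fin_cases i <;> norm_num
      · intro i hi
        fin_cases i
        · simp at hi
        · simp
      · refine posDef_iff_dotProduct_mulVec.mpr ⟨?_, ?_⟩
        · ext i j
          obtain ⟨i, hi⟩ := i; obtain ⟨j, hj⟩ := j
          simp only [Finset.mem_singleton] at hi hj
          subst hi; subst hj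
          rfl
        · intro x hx
          have hx0 : x ⟨0, by simp⟩ ≠ 0 := by
            intro h
            apply hx
            funext j
            obtain ⟨j, hj⟩ := j
            simp at hj
            subst hj
            exact h
          unfold dotProduct mulVec dotProduct
          rw [Finset.sum_eq_single (⟨(0 : Fin 2), by simp⟩ : ({0} : Finset (Fin 2)))]
          · rw [Finset.sum_eq_single (⟨(0 : Fin 2), by simp⟩ : ({0} : Finset (Fin 2)))]
            · simp only [Matrix.submatrix_apply, star_trivial]
              have h00 : (!![1, 0; 0, 0] : Matrix (Fin 2) (Fin 2) ℝ) 0 0 = 1 := rfl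
              rw [h00, one_mul]
              exact mul_self_pos.mpr hx0
            · intro b _ hb
              exfalso; apply hb
              obtain ⟨b, hbm⟩ := b
              simp at hbm
              subst hbm; rfl
            · intro h; exact absurd (Finset.mem_univ _) h
          · intro b _ hb
            exfalso; apply hb
            obtain ⟨b, hbm⟩ := b
            simp at hbm
            subst hbm; rfl
          · intro h; exact absurd (Finset.mem_univ _) h
      · simp [dotProduct, mulVec, Fin.sum_univ_two]
  · intro i; fin_cases i <;> norm_num
  · simp [dotProduct, mulVec, Fin.sum_univ_two]
  · simp [dotProduct, mulVec, Fin.sum_univ_two]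
end

section
/- Let C be an almost negative m×m matrix with c₁₁ > 0 such that lk({1}, C) is parabolic, C is irreducible, and lk({1}, C) is irreducible. Then C is parabolic. -/
open Matrix Finset
set_option linter.unusedSectionVars false
set_option maxHeartbeats 1000000

/-- The link matrix `lk({0}, C)`. -/
noncomputable def lkOne {n : ℕ} (C : Matrix (Fin (n + 1)) (Fin (n + 1)) ℝ) : Matrix (Fin n) (Fin n) ℝ :=
  Matrix.of fun i j => C i.succ j.succ - C 0 i.succ * C 0 j.succ / C 0 0

/-- A symmetric real matrix is parabolic if it has order ≥ 2, determinant 0, and all proper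
principal submatrices are positive definite. -/
def Parabolic {m : Type*} [Fintype m] [DecidableEq m] (A : Matrix m m ℝ) : Prop :=
  2 ≤ Fintype.card m ∧ A.det = 0 ∧
    ∀ S : Finset m, S ≠ Finset.univ →
      (A.submatrix (fun x : S => (x : m)) (fun x : S => (x : m))).PosDef

/-- A symmetric matrix is reducible if its index set admits a partition into two nonempty
parts with all entries between the parts equal to zero. -/
def MatrixReducible {m : Type*} [Fintype m] [DecidableEq m] (A : Matrix m m ℝ) : Prop :=
  ∃ L M : Finset m, L.Nonempty ∧ M.Nonempty ∧ Disjoint L M ∧ L ∪ M = Finset.univ ∧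
    ∀ l ∈ L, ∀ k ∈ M, A l k = 0


variable {m : Type*} [Fintype m] [DecidableEq m]

lemma isHermitian_of_isSymm {A : Matrix m m ℝ} (h : A.IsSymm) : A.IsHermitian := by
  ext i j
  simpa [Matrix.conjTranspose_apply] using h.apply i j

lemma quad_restrict (A : Matrix m m ℝ) (S : Finset m) (y : m → ℝ)
    (hy : ∀ i, i ∉ S → y i = 0) :
    y ⬝ᵥ A *ᵥ y =
      (fun i : S => y i) ⬝ᵥ (A.submatrix (fun x : S => (x : m)) (fun x : S => (x : m))) *ᵥ
        (fun i : S => y i) := by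
  have inner : ∀ i : m, (fun j => A i j) ⬝ᵥ y = ∑ j : S, A i j * y j := by
    intro i
    rw [dotProduct, Finset.sum_coe_sort S (fun j => A i j * y j)]
    exact (Finset.sum_subset S.subset_univ (fun j _ hj => by rw [hy j hj, mul_zero])).symm
  calc y ⬝ᵥ A *ᵥ y = ∑ i : m, y i * (A *ᵥ y) i := rfl
    _ = ∑ i ∈ S, y i * (A *ᵥ y) i :=
        (Finset.sum_subset S.subset_univ (fun i _ hi => by rw [hy i hi, zero_mul])).symm
    _ = ∑ i : S, y (i : m) * (A *ᵥ y) (i : m) :=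
        (Finset.sum_coe_sort S (fun i => y i * (A *ᵥ y) i)).symm
    _ = _ := by
        refine Finset.sum_congr rfl fun i _ => ?_
        rw [mulVec, inner]
        rfl

/-- Positivity of the quadratic form on vectors supported in a proper subset, given that all
proper principal submatrices are positive definite. -/
lemma pos_on_support (A : Matrix m m ℝ)
    (hsub : ∀ S : Finset m, S ≠ Finset.univ →
      (A.submatrix (fun x : S => (x : m)) (fun x : S => (x : m))).PosDef)
    (S : Finset m) (hS : S ≠ Finset.univ) (y : m → ℝ)
    (hy : ∀ i, i ∉ S → y i = 0) (hy0 : y ≠ 0) : 0 < y ⬝ᵥ A *ᵥ y := by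
  rw [quad_restrict A S y hy]
  have hne : (fun i : S => y i) ≠ 0 := by
    obtain ⟨i, hi⟩ := Function.ne_iff.mp hy0
    have hiS : i ∈ S := by by_contra h; exact hi (hy i h)
    exact Function.ne_iff.mpr ⟨⟨i, hiS⟩, hi⟩
  have := (hsub S hS).dotProduct_mulVec_pos hne
  simpa using this

/-- A symmetric singular matrix whose proper principal submatrices are positive definite is
positive semidefinite. -/
lemma psd_of_parabolic_data (A : Matrix m m ℝ) (hsym : A.IsSymm) (hdet : A.det = 0)
    (hsub : ∀ S : Finset m, S ≠ Finset.univ →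
      (A.submatrix (fun x : S => (x : m)) (fun x : S => (x : m))).PosDef) :
    A.PosSemidef := by
  obtain ⟨u, hu0, huk⟩ := Matrix.exists_mulVec_eq_zero_iff.mpr hdet
  refine Matrix.PosSemidef.of_dotProduct_mulVec_nonneg (isHermitian_of_isSymm hsym) fun x => ?_
  simp only [star_trivial]
  obtain ⟨i, hi⟩ := Function.ne_iff.mp hu0
  have hi' : u i ≠ 0 := by simpa using hi
  set y : m → ℝ := x - (x i / u i) • u with hy
  have hAy : A *ᵥ y = A *ᵥ x := by
    rw [hy, mulVec_sub, mulVec_smul, huk, smul_zero, sub_zero]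
  have huAx : u ⬝ᵥ A *ᵥ x = 0 := by
    rw [dotProduct_mulVec, ← mulVec_transpose, hsym.eq, huk, zero_dotProduct]
  have hq : y ⬝ᵥ A *ᵥ y = x ⬝ᵥ A *ᵥ x := by
    rw [hAy, hy, sub_dotProduct, smul_dotProduct, huAx, smul_zero, sub_zero]
  rw [← hq]
  by_cases hy0 : y = 0
  · rw [hy0]; simp
  · have hyi : y i = 0 := by
      simp only [hy, Pi.sub_apply, Pi.smul_apply, smul_eq_mul]
      field_simp
      ring
    refine le_of_lt (pos_on_support A hsub (Finset.univ.erase i) ?_ y ?_ hy0)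
    · intro h
      have h2 := Finset.notMem_erase i Finset.univ
      rw [h] at h2
      exact h2 (Finset.mem_univ i)
    · intro j hj
      have : j = i := by
        by_contra hne
        exact hj (Finset.mem_erase.mpr ⟨hne, Finset.mem_univ j⟩)
      rw [this, hyi]

lemma mul_nonneg_of_nonpos_nonpos' {a b : ℝ} (ha : a ≤ 0) (hb : b ≤ 0) : 0 ≤ a * b := by
  nlinarith

lemma abs_kernel (A : Matrix m m ℝ) (hneg : ∀ i j, i ≠ j → A i j ≤ 0)
    (hpsd : A.PosSemidef) {u : m → ℝ} (huk : A *ᵥ u = 0) :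
    A *ᵥ (fun i => |u i|) = 0 := by
  set w : m → ℝ := fun i => |u i| with hw
  have hle : w ⬝ᵥ A *ᵥ w ≤ u ⬝ᵥ A *ᵥ u := by
    simp only [dotProduct, mulVec, dotProduct, Finset.mul_sum]
    refine Finset.sum_le_sum fun i _ => Finset.sum_le_sum fun j _ => ?_
    by_cases h : i = j
    · subst h
      have h2 := abs_mul_abs_self (u i)
      simp only [hw]
      exact le_of_eq (by linear_combination (A i i) * h2)
    · have hA := hneg i j h
      have h1 : u i * u j ≤ |u i| * |u j| := by
        rw [← abs_mul]; exact le_abs_self _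
      simp only [hw]
      nlinarith
  have hzero : u ⬝ᵥ A *ᵥ u = 0 := by rw [huk, dotProduct_zero]
  have hge : (0 : ℝ) ≤ w ⬝ᵥ A *ᵥ w := by simpa using hpsd.dotProduct_mulVec_nonneg w
  have : star w ⬝ᵥ A *ᵥ w = 0 := by
    simp only [star_trivial]
    linarith [hle.trans_eq hzero]
  exact (hpsd.dotProduct_mulVec_zero_iff w).mp this

lemma pos_of_nonneg_kernel (A : Matrix m m ℝ) (hneg : ∀ i j, i ≠ j → A i j ≤ 0)
    (hirr : ¬ MatrixReducible A) {w : m → ℝ} (hw : ∀ i, 0 ≤ w i) (hw0 : w ≠ 0)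
    (hk : A *ᵥ w = 0) : ∀ i, 0 < w i := by
  by_contra hcon
  push_neg at hcon
  obtain ⟨i, hi⟩ := hcon
  have hwi : w i = 0 := le_antisymm hi (hw i)
  refine hirr ⟨Finset.univ.filter (fun j => w j = 0), Finset.univ.filter (fun j => w j ≠ 0),
    ⟨i, by simp [hwi]⟩, ?_, ?_, ?_, ?_⟩
  · obtain ⟨k, hk'⟩ := Function.ne_iff.mp hw0
    exact ⟨k, by simp; simpa using hk'⟩
  · rw [Finset.disjoint_left]
    intro a ha hb
    simp only [Finset.mem_filter] at ha hb
    exact hb.2 ha.2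
  · exact Finset.filter_union_filter_not_eq (fun j => w j = 0) Finset.univ
  · intro l hl k hkM
    simp only [Finset.mem_filter] at hl hkM
    have hrow : ∑ j : m, A l j * w j = 0 := by
      have := congrFun hk l
      simpa [mulVec, dotProduct] using this
    have hterms : ∀ j ∈ Finset.univ, A l j * w j ≤ 0 := by
      intro j _
      by_cases h : j = l
      · subst h; rw [hl.2, mul_zero]
      · exact mul_nonpos_of_nonpos_of_nonneg (hneg l j (fun he => h he.symm)) (hw j)
    have := (Finset.sum_eq_zero_iff_of_nonpos hterms).mp hrow k (Finset.mem_univ k)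
    rcases mul_eq_zero.mp this with h | h
    · exact h
    · exact absurd h hkM.2

lemma kernel_sign (A : Matrix m m ℝ) (hneg : ∀ i j, i ≠ j → A i j ≤ 0)
    (hpsd : A.PosSemidef) (hirr : ¬ MatrixReducible A) {u : m → ℝ} (hu0 : u ≠ 0)
    (huk : A *ᵥ u = 0) : (∀ i, 0 < u i) ∨ (∀ i, u i < 0) := by
  set w : m → ℝ := fun i => |u i| with hwdef
  have hwk : A *ᵥ w = 0 := abs_kernel A hneg hpsd huk
  have hw0 : w ≠ 0 := by
    obtain ⟨i, hi⟩ := Function.ne_iff.mp hu0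
    refine Function.ne_iff.mpr ⟨i, ?_⟩
    simp only [hwdef, Pi.zero_apply, abs_ne_zero]
    simpa using hi
  have hwpos : ∀ i, 0 < w i :=
    pos_of_nonneg_kernel A hneg hirr (fun i => abs_nonneg _) hw0 hwk
  by_cases hq : w - u = 0
  · left
    intro i
    have := congrFun hq i
    simp only [Pi.sub_apply, Pi.zero_apply, sub_eq_zero] at this
    rw [← this]; exact hwpos i
  · by_cases hp : w + u = 0
    · right
      intro i
      have := congrFun hp i
      simp only [Pi.add_apply, Pi.zero_apply, add_eq_zero_iff_eq_neg] at this
      have := hwpos i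
      rw [hwdef] at this
      simp only at this ⊢
      nlinarith [congrFun hp i, hwpos i]
    · exfalso
      have hpk : A *ᵥ (w + u) = 0 := by rw [mulVec_add, hwk, huk, add_zero]
      have hqk : A *ᵥ (w - u) = 0 := by rw [mulVec_sub, hwk, huk, sub_zero]
      have hppos : ∀ i, 0 < (w + u) i :=
        pos_of_nonneg_kernel A hneg hirr (fun i => by simp [hwdef, neg_abs_le]; nlinarith [neg_abs_le (u i)]) hp hpk
      have hqpos : ∀ i, 0 < (w - u) i :=
        pos_of_nonneg_kernel A hneg hirr (fun i => by simp [hwdef]; nlinarith [le_abs_self (u i)]) hq hqk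
      obtain ⟨i, _⟩ := Function.ne_iff.mp hu0
      have h1 := hppos i
      have h2 := hqpos i
      simp only [Pi.add_apply, Pi.sub_apply, hwdef] at h1 h2
      nlinarith [abs_mul_abs_self (u i)]

lemma quad_identity {n : ℕ} (C : Matrix (Fin (n + 1)) (Fin (n + 1)) ℝ) (hsymm : C.IsSymm)
    (hc : C 0 0 ≠ 0) (x : Fin (n + 1) → ℝ) :
    x ⬝ᵥ C *ᵥ x = C 0 0 * (x 0 + (∑ i : Fin n, C 0 i.succ * x i.succ) / C 0 0) ^ 2
      + (fun i : Fin n => x i.succ) ⬝ᵥ lkOne C *ᵥ (fun i : Fin n => x i.succ) := by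
  have hsym0 : ∀ i : Fin n, C i.succ 0 = C 0 i.succ := fun i => hsymm.apply 0 i.succ
  set s := ∑ i : Fin n, C 0 i.succ * x i.succ with hs
  set Q := ∑ i : Fin n, x i.succ * ∑ j : Fin n, C i.succ j.succ * x j.succ with hQ
  have expand : ∀ i : Fin (n + 1), ∑ j : Fin (n + 1), C i j * x j
      = C i 0 * x 0 + ∑ j : Fin n, C i j.succ * x j.succ := fun i => Fin.sum_univ_succ _
  have hB : x ⬝ᵥ C *ᵥ x = C 0 0 * x 0 ^ 2 + 2 * x 0 * s + Q := by
    calc x ⬝ᵥ C *ᵥ x = ∑ i : Fin (n + 1), x i * ∑ j : Fin (n + 1), C i j * x j := rfl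
      _ = x 0 * ∑ j : Fin (n + 1), C 0 j * x j
          + ∑ i : Fin n, x i.succ * ∑ j : Fin (n + 1), C i.succ j * x j := Fin.sum_univ_succ _
      _ = x 0 * (C 0 0 * x 0 + s)
          + ∑ i : Fin n, x i.succ * (C 0 i.succ * x 0 + ∑ j : Fin n, C i.succ j.succ * x j.succ) := by
          rw [expand 0]
          congr 1
          refine Finset.sum_congr rfl fun i _ => ?_
          rw [expand i.succ, hsym0 i]
      _ = x 0 * (C 0 0 * x 0 + s)
          + ((∑ i : Fin n, x 0 * (C 0 i.succ * x i.succ))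
            + ∑ i : Fin n, x i.succ * ∑ j : Fin n, C i.succ j.succ * x j.succ) := by
          rw [← Finset.sum_add_distrib]
          congr 1
          exact Finset.sum_congr rfl fun i _ => by ring
      _ = C 0 0 * x 0 ^ 2 + 2 * x 0 * s + Q := by
          rw [← Finset.mul_sum, ← hs, ← hQ]; ring
  have inner : ∀ i : Fin n, ∑ j : Fin n, (C i.succ j.succ - C 0 i.succ * C 0 j.succ / C 0 0) * x j.succ
      = (∑ j : Fin n, C i.succ j.succ * x j.succ) - C 0 i.succ / C 0 0 * s := by
    intro i
    rw [hs, Finset.mul_sum, ← Finset.sum_sub_distrib]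
    exact Finset.sum_congr rfl fun j _ => by ring
  have hA : (fun i : Fin n => x i.succ) ⬝ᵥ lkOne C *ᵥ (fun i : Fin n => x i.succ)
      = Q - s * (s / C 0 0) := by
    calc (fun i : Fin n => x i.succ) ⬝ᵥ lkOne C *ᵥ (fun i : Fin n => x i.succ)
        = ∑ i : Fin n, x i.succ
            * ∑ j : Fin n, (C i.succ j.succ - C 0 i.succ * C 0 j.succ / C 0 0) * x j.succ := rfl
      _ = ∑ i : Fin n, (x i.succ * ∑ j : Fin n, C i.succ j.succ * x j.succ
            - s / C 0 0 * (C 0 i.succ * x i.succ)) := by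
          refine Finset.sum_congr rfl fun i _ => ?_
          rw [inner i]; ring
      _ = Q - s / C 0 0 * s := by
          rw [Finset.sum_sub_distrib, ← Finset.mul_sum, ← hQ, ← hs]
      _ = Q - s * (s / C 0 0) := by ring
  rw [hB, hA]
  field_simp
  ring

/-- If `C` is almost negative with `C 0 0 > 0`, `lk({0}, C)` is parabolic, and both
`C` and `lk({0}, C)` are irreducible, then `C` is parabolic. -/
theorem stmt6 (n : ℕ) (C : Matrix (Fin (n + 1)) (Fin (n + 1)) ℝ) (hsymm : C.IsSymm)
    (hneg : ∀ i j : Fin (n + 1), i ≠ j → C i j ≤ 0) (hpos : 0 < C 0 0)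
    (hpar : Parabolic (lkOne C)) (hirr : ¬ MatrixReducible C)
    (hirrlk : ¬ MatrixReducible (lkOne C)) : Parabolic C := by
  unfold Parabolic at hpar ⊢
  have hc : C 0 0 ≠ 0 := hpos.ne'
  have hn2 : 2 ≤ n := by simpa using hpar.1
  have hsym0 : ∀ i : Fin n, C i.succ 0 = C 0 i.succ := fun i => hsymm.apply 0 i.succ
  have hlksymm : (lkOne C).IsSymm := by
    apply Matrix.IsSymm.ext
    intro i j
    simp only [lkOne, Matrix.of_apply]
    rw [hsymm.apply i.succ j.succ]
    ring
  have hlkneg : ∀ i j : Fin n, i ≠ j → lkOne C i j ≤ 0 := by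
    intro i j hij
    have h1 : C i.succ j.succ ≤ 0 := hneg _ _ (fun h => hij (Fin.succ_injective n h))
    have h2 : 0 ≤ C 0 i.succ * C 0 j.succ :=
      mul_nonneg_of_nonpos_nonpos' (hneg _ _ (Fin.succ_ne_zero i).symm)
        (hneg _ _ (Fin.succ_ne_zero j).symm)
    have h3 : 0 ≤ C 0 i.succ * C 0 j.succ / C 0 0 := div_nonneg h2 hpos.le
    simp only [lkOne, Matrix.of_apply]
    linarith
  have hpsdlk : (lkOne C).PosSemidef :=
    psd_of_parabolic_data _ hlksymm hpar.2.1 hpar.2.2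
  -- a kernel vector for lkOne C
  obtain ⟨u, hu0, huk⟩ := Matrix.exists_mulVec_eq_zero_iff.mpr hpar.2.1
  have key : ∀ i : Fin n, ∑ j : Fin n, C i.succ j.succ * u j
      = C 0 i.succ * (∑ j : Fin n, C 0 j.succ * u j) / C 0 0 := by
    intro i
    have hrow : ∑ j : Fin n, (C i.succ j.succ - C 0 i.succ * C 0 j.succ / C 0 0) * u j = 0 := by
      simpa [mulVec, dotProduct, lkOne] using congrFun huk i
    have h2 : ∑ j : Fin n, (C i.succ j.succ * u j)
        - ∑ j : Fin n, (C 0 i.succ / C 0 0 * (C 0 j.succ * u j)) = 0 := by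
      rw [← Finset.sum_sub_distrib, ← hrow]
      exact Finset.sum_congr rfl fun j _ => by ring
    rw [← Finset.mul_sum] at h2
    field_simp at h2 ⊢
    linarith
  refine ⟨by simp [Fintype.card_fin]; omega, ?_, ?_⟩
  · -- determinant of C is zero
    set s := ∑ j : Fin n, C 0 j.succ * u j with hs
    set xt : Fin (n + 1) → ℝ := fun k => Fin.cases (-(s / C 0 0)) (fun i => u i) k with hxt
    have hxt0 : xt ≠ 0 := by
      obtain ⟨i, hi⟩ := Function.ne_iff.mp hu0
      refine Function.ne_iff.mpr ⟨i.succ, ?_⟩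
      simpa [hxt] using hi
    refine Matrix.exists_mulVec_eq_zero_iff.mp ⟨xt, hxt0, ?_⟩
    funext k
    have hexp : ∀ i : Fin (n + 1), (C *ᵥ xt) i
        = C i 0 * (-(s / C 0 0)) + ∑ j : Fin n, C i j.succ * u j := by
      intro i
      show ∑ j : Fin (n + 1), C i j * xt j = _
      rw [Fin.sum_univ_succ]
      simp [hxt]
    refine Fin.cases ?_ ?_ k
    · rw [hexp 0, ← hs]
      simp only [Pi.zero_apply]
      field_simp
      ring
    · intro i
      rw [hexp i.succ, key i, hsym0 i]
      simp only [Pi.zero_apply]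
      field_simp
      ring
  · -- all proper principal submatrices are positive definite
    intro S hS
    refine Matrix.PosDef.of_dotProduct_mulVec_pos ?_ ?_
    · apply isHermitian_of_isSymm
      apply Matrix.IsSymm.ext
      intro i j
      exact hsymm.apply _ _
    · intro x hx
      simp only [star_trivial]
      set xh : Fin (n + 1) → ℝ := fun i => if h : i ∈ S then x ⟨i, h⟩ else 0 with hxh
      have hrestr : (fun i : S => xh i) = x := by
        funext i
        simp [hxh, i.2]
      have hsupp : ∀ i, i ∉ S → xh i = 0 := fun i h => dif_neg h
      have hxh0 : xh ≠ 0 := by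
        obtain ⟨a, ha⟩ := Function.ne_iff.mp hx
        refine Function.ne_iff.mpr ⟨a, ?_⟩
        simp only [hxh, dif_pos a.2, Pi.zero_apply]
        simpa using ha
      rw [← hrestr, ← quad_restrict C S xh hsupp, quad_identity C hsymm hc xh]
      by_cases hx' : (fun i : Fin n => xh i.succ) = 0
      · have hzero : ∀ i : Fin n, xh i.succ = 0 := fun i => congrFun hx' i
        have hs0 : (∑ i : Fin n, C 0 i.succ * xh i.succ) = 0 :=
          Finset.sum_eq_zero fun i _ => by rw [hzero i, mul_zero]
        have h0 : xh 0 ≠ 0 := by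
          obtain ⟨k, hk⟩ := Function.ne_iff.mp hxh0
          simp only [Pi.zero_apply] at hk
          rcases Fin.eq_zero_or_eq_succ k with rfl | ⟨j, rfl⟩
          · exact hk
          · exact absurd (hzero j) hk
        rw [hx', hs0, zero_dotProduct]
        have : 0 < (xh 0 + 0 / C 0 0) ^ 2 := by
          have h1 : xh 0 + 0 / C 0 0 ≠ 0 := by simpa using h0
          exact lt_of_le_of_ne (sq_nonneg _) (Ne.symm (pow_ne_zero 2 h1))
        nlinarith
      · set S' := Finset.univ.filter (fun i : Fin n => i.succ ∈ S) with hS'def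
        have hsupp' : ∀ i : Fin n, i ∉ S' → xh i.succ = 0 := by
          intro i h
          exact hsupp i.succ (by simpa [hS'def] using h)
        set x' : Fin n → ℝ := fun i => xh i.succ with hx'def
        by_cases hS' : S' = Finset.univ
        · -- S' = univ : S contains all successors, hence 0 ∉ S
          have hall : ∀ i : Fin n, i.succ ∈ S := by
            intro i
            have : i ∈ S' := hS' ▸ Finset.mem_univ i
            exact (Finset.mem_filter.mp this).2
          have h0S : (0 : Fin (n + 1)) ∉ S := by
            intro h
            exact hS (Finset.eq_univ_iff_forall.mpr fun k =>
              Fin.cases h (fun j => hall j) k)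
          have hxh00 : xh 0 = 0 := hsupp 0 h0S
          have hqv : 0 ≤ (fun i : Fin n => xh i.succ) ⬝ᵥ lkOne C *ᵥ (fun i : Fin n => xh i.succ) := by
            simpa using hpsdlk.dotProduct_mulVec_nonneg (fun i : Fin n => xh i.succ)
          rcases hqv.lt_or_eq with hlt | heq
          · have h1 : 0 ≤ C 0 0 * (xh 0 + (∑ i : Fin n, C 0 i.succ * xh i.succ) / C 0 0) ^ 2 :=
              mul_nonneg hpos.le (sq_nonneg _)
            linarith
          · -- the form vanishes : kernel vector, use irreducibility
            have hker : lkOne C *ᵥ (fun i : Fin n => xh i.succ) = 0 := by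
              apply (hpsdlk.dotProduct_mulVec_zero_iff (fun i : Fin n => xh i.succ)).mp
              simpa using heq.symm
            have hsign := kernel_sign (lkOne C) hlkneg hpsdlk hirrlk hx' hker
            have hsne : (∑ i : Fin n, C 0 i.succ * xh i.succ) ≠ 0 := by
              intro hs0
              have hC0 : ∀ j : Fin n, C 0 j.succ = 0 := by
                rcases hsign with hp | hn
                · intro j
                  have hterms : ∀ j ∈ (Finset.univ : Finset (Fin n)), C 0 j.succ * xh j.succ ≤ 0 := fun (j : Fin n) _ =>
                    mul_nonpos_of_nonpos_of_nonneg (hneg _ _ (Fin.succ_ne_zero j).symm) (hp j).le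
                  have := (Finset.sum_eq_zero_iff_of_nonpos hterms).mp hs0 j (Finset.mem_univ j)
                  rcases mul_eq_zero.mp this with h | h
                  · exact h
                  · exact absurd h (hp j).ne'
                · intro j
                  have hterms : ∀ j ∈ (Finset.univ : Finset (Fin n)), 0 ≤ C 0 j.succ * xh j.succ := fun (j : Fin n) _ =>
                    mul_nonneg_of_nonpos_nonpos' (hneg _ _ (Fin.succ_ne_zero j).symm) (hn j).le
                  have h2 := (Finset.sum_eq_zero_iff_of_nonneg hterms).mp hs0 j (Finset.mem_univ j)
                  rcases mul_eq_zero.mp h2 with h | h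
                  · exact h
                  · exact absurd h (hn j).ne
              refine hirr ⟨{0}, Finset.univ \ {0}, ⟨0, Finset.mem_singleton_self 0⟩, ?_, ?_, ?_, ?_⟩
              · refine ⟨(⟨0, by omega⟩ : Fin n).succ, ?_⟩
                simp [Fin.ext_iff]
              · simp [Finset.disjoint_left]
              · exact Finset.union_sdiff_of_subset (Finset.subset_univ _)
              · intro l hl k hk
                rw [Finset.mem_singleton.mp hl]
                obtain ⟨j, rfl⟩ := Fin.exists_succ_eq_of_ne_zero
                  (by simpa using (Finset.mem_sdiff.mp hk).2)
                exact hC0 j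
            rw [← heq, hxh00, zero_add, add_zero]
            have hd : (∑ i : Fin n, C 0 i.succ * xh i.succ) / C 0 0 ≠ 0 := div_ne_zero hsne hc
            exact mul_pos hpos (lt_of_le_of_ne (sq_nonneg _) (Ne.symm (pow_ne_zero 2 hd)))
        · -- S' proper : use positive definiteness of the proper submatrix of lkOne C
          have hlt : 0 < (fun i : Fin n => xh i.succ) ⬝ᵥ lkOne C *ᵥ (fun i : Fin n => xh i.succ) :=
            pos_on_support (lkOne C) hpar.2.2 S' hS' _ hsupp' hx'
          have h1 : 0 ≤ C 0 0 * (xh 0 + (∑ i : Fin n, C 0 i.succ * xh i.succ) / C 0 0) ^ 2 :=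
            mul_nonneg hpos.le (sq_nonneg _)
          linarith
end
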